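/- Let $R$ be a commutative ring, $d \in R$, and $n \in \mathbb{N}$. Then $T_{-d}\Big( d^{n+1}\, t^{n+1}\, (1+d t)^{-(n+1)} \Big) = d^{n+1}\, t^{n+1}\, (1-d t)^{-1}$. (This is the formal identity computing the contribution of the vertex in the proof of the linear-join formula: the push-forward of the exceptional-divisor term is $\frac{d^{n+1}[V\times\mathbb{P}^m]}{(1+dH)^{n+1}}$, and tensoring it by $\mathscr{O}(-dH)$ yields $\frac{d^{n+1}[V\times\mathbb{P}^m]}{1-dH}$.) -/

import Mathlib

open PowerSeries Finset

/-- The power series `1 + λ t`. -/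
noncomputable def oneAdd {R : Type*} [CommRing R] (l : R) : PowerSeries R :=
  1 + PowerSeries.C l * PowerSeries.X

/-- The inverse power series `(1 + λ t)⁻¹`, via `invOfUnit` (constant coefficient `1`). -/
noncomputable def invOneAdd {R : Type*} [CommRing R] (l : R) : PowerSeries R :=
  PowerSeries.invOfUnit (oneAdd l) 1

/-- The tensor operation `T_λ`, defined coefficientwise:
`T_λ(∑ aᵢ tⁱ) = ∑ aᵢ tⁱ (1+λt)^{-(i+1)}`; the coefficient of `t^m` is the finite sum
`∑_{i=0}^m aᵢ · [t^{m-i}] (1+λt)^{-(i+1)}`. -/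
noncomputable def T {R : Type*} [CommRing R] (l : R) (F : PowerSeries R) : PowerSeries R :=
  PowerSeries.mk fun m => ∑ i ∈ Finset.range (m + 1),
    PowerSeries.coeff i F * PowerSeries.coeff (m - i) (invOneAdd l ^ (i + 1))

section Aux

variable {R : Type*} [CommRing R]

lemma oneAdd_mul_invOneAdd (l : R) : oneAdd l * invOneAdd l = 1 :=
  PowerSeries.mul_invOfUnit (oneAdd l) 1 (by simp [oneAdd])

lemma invOneAdd_mul_oneAdd (l : R) : invOneAdd l * oneAdd l = 1 := by
  rw [mul_comm]; exact oneAdd_mul_invOneAdd l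

lemma T_C_mul (l a : R) (F : PowerSeries R) : T l (PowerSeries.C a * F) = PowerSeries.C a * T l F := by
  ext m
  simp [T, Finset.mul_sum, mul_assoc]

lemma T_add (l : R) (F G : PowerSeries R) : T l (F + G) = T l F + T l G := by
  ext m
  simp [T, add_mul, Finset.sum_add_distrib]

lemma T_one (l : R) : T l 1 = invOneAdd l := by
  ext m
  simp [T, coeff_one, ite_mul, Finset.sum_ite_eq]

/-- Swap a triangular double sum. -/
lemma triangle_swap {M : Type*} [AddCommMonoid M] (m : ℕ) (f : ℕ → ℕ → M) :
    ∑ i ∈ Finset.range (m + 1), ∑ s ∈ Finset.range (m - i + 1), f i s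
      = ∑ s ∈ Finset.range (m + 1), ∑ i ∈ Finset.range (m - s + 1), f i s := by
  have key : ∀ (g : ℕ → M) (k : ℕ), k ≤ m →
      ∑ s ∈ Finset.range (m - k + 1), g s
        = ∑ s ∈ Finset.range (m + 1), if k + s ≤ m then g s else 0 := by
    intro g k hk
    rw [← Finset.sum_filter]
    apply Finset.sum_congr _ (fun _ _ => rfl)
    ext s
    simp only [Finset.mem_filter, Finset.mem_range]
    omega
  calc ∑ i ∈ Finset.range (m + 1), ∑ s ∈ Finset.range (m - i + 1), f i s
      = ∑ i ∈ Finset.range (m + 1), ∑ s ∈ Finset.range (m + 1),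
          if i + s ≤ m then f i s else 0 :=
        Finset.sum_congr rfl fun i hi => key (f i) i (by simpa using Nat.lt_succ_iff.mp (Finset.mem_range.mp hi))
    _ = ∑ s ∈ Finset.range (m + 1), ∑ i ∈ Finset.range (m + 1),
          if i + s ≤ m then f i s else 0 := Finset.sum_comm
    _ = ∑ s ∈ Finset.range (m + 1), ∑ i ∈ Finset.range (m - s + 1), f i s := by
        refine Finset.sum_congr rfl fun s hs => ?_
        rw [key (fun i => f i s) s (Nat.lt_succ_iff.mp (Finset.mem_range.mp hs))]
        exact Finset.sum_congr rfl fun i _ => by rw [Nat.add_comm i s]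

lemma T_X_mul (l : R) (F : PowerSeries R) :
    T l (PowerSeries.X * F) = PowerSeries.X * (invOneAdd l * T l F) := by
  ext m
  cases m with
  | zero =>
    simp [T]
  | succ m =>
    rw [PowerSeries.coeff_succ_X_mul]
    simp only [T, PowerSeries.coeff_mk]
    rw [Finset.sum_range_succ']
    simp only [PowerSeries.coeff_succ_X_mul, PowerSeries.coeff_zero_X_mul, zero_mul, add_zero,
      Nat.add_sub_add_right]
    rw [PowerSeries.coeff_mul, Finset.Nat.sum_antidiagonal_eq_sum_range_succ_mk]
    simp only [PowerSeries.coeff_mk]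
    have expand : ∀ i, PowerSeries.coeff (m - i) (invOneAdd l ^ (i + 1 + 1))
        = ∑ s ∈ Finset.range (m - i + 1),
            PowerSeries.coeff s (invOneAdd l)
              * PowerSeries.coeff (m - i - s) (invOneAdd l ^ (i + 1)) := by
      intro i
      rw [pow_succ', PowerSeries.coeff_mul, Finset.Nat.sum_antidiagonal_eq_sum_range_succ_mk]
    calc ∑ i ∈ Finset.range (m + 1),
          PowerSeries.coeff i F * PowerSeries.coeff (m - i) (invOneAdd l ^ (i + 1 + 1))
        = ∑ i ∈ Finset.range (m + 1), ∑ s ∈ Finset.range (m - i + 1),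
            PowerSeries.coeff i F * (PowerSeries.coeff s (invOneAdd l)
              * PowerSeries.coeff (m - i - s) (invOneAdd l ^ (i + 1))) := by
          refine Finset.sum_congr rfl fun i _ => ?_
          rw [expand i, Finset.mul_sum]
      _ = ∑ s ∈ Finset.range (m + 1), ∑ i ∈ Finset.range (m - s + 1),
            PowerSeries.coeff i F * (PowerSeries.coeff s (invOneAdd l)
              * PowerSeries.coeff (m - i - s) (invOneAdd l ^ (i + 1))) :=
          triangle_swap m _
      _ = ∑ s ∈ Finset.range (m + 1), PowerSeries.coeff s (invOneAdd l)
            * ∑ i ∈ Finset.range (m - s + 1),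
                PowerSeries.coeff i F
                  * PowerSeries.coeff (m - s - i) (invOneAdd l ^ (i + 1)) := by
          refine Finset.sum_congr rfl fun s _ => ?_
          rw [Finset.mul_sum]
          refine Finset.sum_congr rfl fun i _ => ?_
          rw [Nat.sub_right_comm m i s]
          ring

lemma T_X_pow_mul (l : R) (k : ℕ) (F : PowerSeries R) :
    T l (PowerSeries.X ^ k * F) = PowerSeries.X ^ k * (invOneAdd l ^ k * T l F) := by
  induction k with
  | zero => simp
  | succ k ih =>
    rw [pow_succ', mul_assoc, T_X_mul, ih]
    ring

lemma invOneAdd_eq (d : R) :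
    invOneAdd (-d) = 1 + PowerSeries.C d * (PowerSeries.X * invOneAdd (-d)) := by
  have h := oneAdd_mul_invOneAdd (-d : R)
  rw [oneAdd, map_neg] at h
  linear_combination h

lemma T_neg_oneAdd_mul (d : R) (F : PowerSeries R) :
    T (-d) (oneAdd d * F) = invOneAdd (-d) * T (-d) F := by
  have h1 : oneAdd d * F = F + PowerSeries.C d * (PowerSeries.X * F) := by
    rw [oneAdd]; ring
  rw [h1, T_add, T_C_mul, T_X_mul]
  conv_rhs => rw [invOneAdd_eq d]
  ring

lemma T_neg_invOneAdd_pow (d : R) (k : ℕ) (G : PowerSeries R) :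
    T (-d) (invOneAdd d ^ k * G) = oneAdd (-d) ^ k * T (-d) G := by
  induction k with
  | zero => simp
  | succ k ih =>
    have h := T_neg_oneAdd_mul d (invOneAdd d ^ (k + 1) * G)
    have h2 : oneAdd d * (invOneAdd d ^ (k + 1) * G) = invOneAdd d ^ k * G := by
      rw [pow_succ', ← mul_assoc, ← mul_assoc, oneAdd_mul_invOneAdd, one_mul]
    rw [h2, ih] at h
    calc T (-d) (invOneAdd d ^ (k + 1) * G)
        = (oneAdd (-d) * invOneAdd (-d)) * T (-d) (invOneAdd d ^ (k + 1) * G) := by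
          rw [oneAdd_mul_invOneAdd, one_mul]
      _ = oneAdd (-d) * (invOneAdd (-d) * T (-d) (invOneAdd d ^ (k + 1) * G)) := by ring
      _ = oneAdd (-d) * (oneAdd (-d) ^ k * T (-d) G) := by rw [← h]
      _ = oneAdd (-d) ^ (k + 1) * T (-d) G := by ring

end Aux

/-- `T_{-d}(d^{n+1} t^{n+1} (1+dt)^{-(n+1)}) = d^{n+1} t^{n+1} (1-dt)⁻¹` (vertex
contribution in the linear-join formula). -/
theorem tensor_vertex_contribution {R : Type*} [CommRing R] (d : R) (n : ℕ) :
    T (-d) (PowerSeries.C (d ^ (n + 1)) * PowerSeries.X ^ (n + 1) *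
        invOneAdd d ^ (n + 1)) =
      PowerSeries.C (d ^ (n + 1)) * PowerSeries.X ^ (n + 1) * invOneAdd (-d) := by
  rw [mul_assoc, T_C_mul, T_X_pow_mul, ← mul_one (invOneAdd d ^ (n + 1)),
    T_neg_invOneAdd_pow, T_one]
  have h : invOneAdd (-d : R) ^ (n + 1) * oneAdd (-d) ^ (n + 1) = 1 := by
    rw [← mul_pow, invOneAdd_mul_oneAdd, one_pow]
  linear_combination (PowerSeries.C (d ^ (n + 1)) * PowerSeries.X ^ (n + 1)
    * invOneAdd (-d : R)) * h
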